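/- Let I be a finite index set, and let n > 0, k > 0 and, for all i, j ∈ I, N_i > 0 and N_{ij} > 0 be real numbers. For a real matrix M = (M_{ij})_{i,j∈I} define the skip-gram negative-sampling (SGNS) loss ℓ(M) = −Σ_{i,j∈I} [ N_{ij}·log σ(M_{ij}) + (k/n)·N_i·N_j·log σ(−M_{ij}) ]. Define the shifted relatedness matrix R̃_{ij} = log( n·N_{ij} / (k·N_i·N_j) ) and the weights m_{ij} = N_{ij} + (k/n)·N_i·N_j. Then for every real matrix M, ℓ(M) − ℓ(R̃) = Σ_{i,j∈I} m_{ij} · D_KL( σ(R̃_{ij}) ‖ σ(M_{ij}) ); that is, the excess SGNS loss of M over the loss at R̃ equals the weighted sum of KL divergences between the Bernoulli co-occurrence distributions induced by R̃ and by M. -/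

import Mathlib

open Finset

/-- The logistic sigmoid function. -/
noncomputable def sigmoid (x : ℝ) : ℝ := 1 / (1 + Real.exp (-x))

/-- KL divergence between Bernoulli(a) and Bernoulli(b). -/
noncomputable def klBern (a b : ℝ) : ℝ :=
  a * Real.log (a / b) + (1 - a) * Real.log ((1 - a) / (1 - b))

lemma sigmoid_pos (x : ℝ) : 0 < sigmoid x := by
  unfold sigmoid
  positivity

lemma sigmoid_lt_one (x : ℝ) : sigmoid x < 1 := by
  unfold sigmoid
  rw [div_lt_one (by positivity)]
  linarith [Real.exp_pos (-x)]

lemma sigmoid_neg (x : ℝ) : sigmoid (-x) = 1 - sigmoid x := by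
  unfold sigmoid
  rw [neg_neg, Real.exp_neg]
  have h := Real.exp_pos x
  field_simp
  ring

lemma sigmoid_log {t : ℝ} (ht : 0 < t) : sigmoid (Real.log t) = t / (t + 1) := by
  unfold sigmoid
  rw [Real.exp_neg, Real.exp_log ht]
  rw [eq_div_iff (by positivity)]
  field_simp

/-- The excess SGNS loss of an inner-product matrix `M` over the loss at the
shifted relatedness matrix `R̃` equals the weighted sum of KL divergences
between the Bernoulli co-occurrence distributions induced by `R̃` and by `M`. -/
theorem sgns_excess_loss_eq_weighted_kl
    {I : Type*} [Fintype I]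
    (n k : ℝ) (hn : 0 < n) (hk : 0 < k)
    (N : I → ℝ) (Nij : I → I → ℝ)
    (hN : ∀ i, 0 < N i) (hNij : ∀ i j, 0 < Nij i j)
    (ℓ : (I → I → ℝ) → ℝ)
    (hℓ : ∀ M : I → I → ℝ, ℓ M =
      -∑ i, ∑ j, (Nij i j * Real.log (sigmoid (M i j))
        + (k / n) * N i * N j * Real.log (sigmoid (-(M i j)))))
    (R : I → I → ℝ)
    (hR : ∀ i j, R i j = Real.log (n * Nij i j / (k * N i * N j)))
    (m : I → I → ℝ)
    (hm : ∀ i j, m i j = Nij i j + (k / n) * N i * N j) :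
    ∀ M : I → I → ℝ,
      ℓ M - ℓ R = ∑ i, ∑ j, m i j * klBern (sigmoid (R i j)) (sigmoid (M i j)) := by
  intro M
  rw [hℓ M, hℓ R, neg_sub_neg, ← Finset.sum_sub_distrib]
  refine Finset.sum_congr rfl fun i _ => ?_
  rw [← Finset.sum_sub_distrib]
  refine Finset.sum_congr rfl fun j _ => ?_
  set p := Nij i j with hp
  set q := (k / n) * N i * N j with hq
  have hp0 : 0 < p := hNij i j
  have hq0 : 0 < q := by
    have := hN i; have := hN j
    positivity
  have hpq : 0 < p + q := by linarith
  set a := sigmoid (R i j) with ha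
  set b := sigmoid (M i j) with hb
  have ha0 : 0 < a := sigmoid_pos _
  have ha1 : a < 1 := sigmoid_lt_one _
  have hb0 : 0 < b := sigmoid_pos _
  have hb1 : b < 1 := sigmoid_lt_one _
  have hNi := hN i
  have hNj := hN j
  have hNij0 := hNij i j
  have haval : a = p / (p + q) := by
    rw [ha, hR i j, sigmoid_log (by positivity : (0:ℝ) < n * Nij i j / (k * N i * N j))]
    rw [div_eq_div_iff (by positivity) hpq.ne']
    field_simp [hq]
    have hnq : n * q = k * N i * N j := by rw [hq]; field_simp
    linear_combination Nij i j * hnq - k * N i * N j * hp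
  have h1 : (p + q) * a = p := by
    rw [haval]; field_simp
  have h2 : (p + q) * (1 - a) = q := by
    rw [haval]; field_simp; ring
  rw [hm i j, klBern, sigmoid_neg, sigmoid_neg, ← ha, ← hb,
    Real.log_div ha0.ne' hb0.ne',
    Real.log_div (by linarith : (0:ℝ) < 1 - a).ne' (by linarith : (0:ℝ) < 1 - b).ne']
  linear_combination (-(Real.log a - Real.log b)) * h1 +
    (-(Real.log (1 - a) - Real.log (1 - b))) * h2
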